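/- Let G be a graph with independence number at most t and let H be a maximal ℤ₃-connected subgraph of G with |V(H)| ≥ t + 1. Then G − V(H) has independence number at most t − 1. -/

import Mathlib

/-- A finite loopless multigraph: each edge has an ordered pair of distinct endpoints
(the ordering is immaterial; it is only used to describe orientations). -/
structure Multigraph : Type 1 where
  V : Type
  fintypeV : Fintype V
  decEqV : DecidableEq V
  E : Type
  fintypeE : Fintype E
  decEqE : DecidableEq E
  ends : E → V × V
  loopless : ∀ e, (ends e).1 ≠ (ends e).2

attribute [instance] Multigraph.fintypeV Multigraph.decEqV Multigraph.fintypeE Multigraph.decEqE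

namespace Multigraph

variable (G : Multigraph)

/-- Tail of an edge under an orientation `D` (`true` = directed from first to second end). -/
def tail (D : G.E → Bool) (e : G.E) : G.V := if D e then (G.ends e).1 else (G.ends e).2

/-- Head of an edge under an orientation `D`. -/
def head (D : G.E → Bool) (e : G.E) : G.V := if D e then (G.ends e).2 else (G.ends e).1

/-- Out-degree of `v` under orientation `D`. -/
def outDeg (D : G.E → Bool) (v : G.V) : ℕ := (Finset.univ.filter fun e => G.tail D e = v).card

/-- In-degree of `v` under orientation `D`. -/
def inDeg (D : G.E → Bool) (v : G.V) : ℕ := (Finset.univ.filter fun e => G.head D e = v).card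

/-- A modulo 3-orientation. -/
def HasMod3Orientation : Prop :=
  ∃ D : G.E → Bool, ∀ v : G.V, ((G.outDeg D v : ZMod 3) = (G.inDeg D v : ZMod 3))

/-- A nowhere-zero 3-flow. -/
def HasNowhereZero3Flow : Prop :=
  ∃ (D : G.E → Bool) (f : G.E → ℤ),
    (∀ e, 1 ≤ |f e| ∧ |f e| ≤ 2) ∧
    (∀ v : G.V,
      (∑ e : G.E, if G.tail D e = v then f e else 0) =
      (∑ e : G.E, if G.head D e = v then f e else 0))

/-- `ℤ₃`-connectivity. -/
def Z3Connected : Prop :=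
  ∀ b : G.V → ZMod 3, (∑ v : G.V, b v) = 0 →
    ∃ D : G.E → Bool, ∀ v : G.V, (G.outDeg D v : ZMod 3) - (G.inDeg D v : ZMod 3) = b v

/-- Degree of a vertex. -/
def degree (v : G.V) : ℕ :=
  (Finset.univ.filter fun e => (G.ends e).1 = v ∨ (G.ends e).2 = v).card

/-- Minimum degree `δ(G)`. -/
noncomputable def minDegree : ℕ := sInf (Set.range G.degree)

/-- The edge cut `∂_G(S)`. -/
def cut (S : Finset G.V) : Finset G.E :=
  Finset.univ.filter fun e =>
    ((G.ends e).1 ∈ S ∧ (G.ends e).2 ∉ S) ∨ ((G.ends e).2 ∈ S ∧ (G.ends e).1 ∉ S)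

def Adjacent (u v : G.V) : Prop :=
  ∃ e : G.E, G.ends e = (u, v) ∨ G.ends e = (v, u)

def IsIndepSet (S : Finset G.V) : Prop :=
  ∀ u ∈ S, ∀ v ∈ S, u ≠ v → ¬ G.Adjacent u v

/-- The independence number `α(G)`. -/
noncomputable def indepNum : ℕ := sSup {n : ℕ | ∃ S : Finset G.V, G.IsIndepSet S ∧ S.card = n}

def FiveEdgeConnected : Prop :=
  ∀ S : Finset G.V, S.Nonempty → S ≠ Finset.univ → 5 ≤ (G.cut S).card

/-- Every odd edge cut has at least 5 edges. -/
def Odd5EdgeConnected : Prop :=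
  ∀ S : Finset G.V, Odd (G.cut S).card → 5 ≤ (G.cut S).card

/-- `G` contains `K₄` as a subgraph. -/
def ContainsK4 : Prop :=
  ∃ a b c d : G.V, a ≠ b ∧ a ≠ c ∧ a ≠ d ∧ b ≠ c ∧ b ≠ d ∧ c ≠ d ∧
    G.Adjacent a b ∧ G.Adjacent a c ∧ G.Adjacent a d ∧
    G.Adjacent b c ∧ G.Adjacent b d ∧ G.Adjacent c d

/-- The neighbourhood `N(X)`: vertices outside `X` with a neighbour in `X`. -/
noncomputable def neighborFinset (X : Finset G.V) : Finset G.V := by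
  classical
  exact Finset.univ.filter fun y => y ∉ X ∧ ∃ x ∈ X, G.Adjacent x y

/-- Induced subgraph on a vertex set `S`. -/
def induce (S : Finset G.V) : Multigraph where
  V := {v // v ∈ S}
  fintypeV := inferInstance
  decEqV := inferInstance
  E := {e : G.E // (G.ends e).1 ∈ S ∧ (G.ends e).2 ∈ S}
  fintypeE := inferInstance
  decEqE := inferInstance
  ends := fun e => (⟨(G.ends e.1).1, e.2.1⟩, ⟨(G.ends e.1).2, e.2.2⟩)
  loopless := fun e h => G.loopless e.1 (congrArg Subtype.val h)

/-- The relation identifying the two ends of each edge in `F`. -/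
def contractRel (F : Set G.E) (x y : G.V) : Prop :=
  ∃ e ∈ F, G.ends e = (x, y) ∨ G.ends e = (y, x)

/-- Contraction of a set `F` of edges: identify endpoints of edges of `F`
(via the equivalence closure), delete the edges of `F` and all resulting loops. -/
noncomputable def contractEdges (F : Set G.E) : Multigraph := by
  classical
  exact
    { V := Quot (G.contractRel F)
      fintypeV := Fintype.ofSurjective (Quot.mk _) (fun q => Quot.inductionOn q fun a => ⟨a, rfl⟩)
      decEqV := Classical.decEq _
      E := {e : G.E // e ∉ F ∧
            Quot.mk (G.contractRel F) (G.ends e).1 ≠ Quot.mk (G.contractRel F) (G.ends e).2}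
      fintypeE := Subtype.fintype _
      decEqE := Classical.decEq _
      ends := fun e => (Quot.mk _ (G.ends e.1).1, Quot.mk _ (G.ends e.1).2)
      loopless := fun e => e.2.2 }

end Multigraph

/-- A subgraph of a multigraph. -/
structure Multigraph.Subgraph (G : Multigraph) where
  verts : Finset G.V
  edges : Finset G.E
  ends_mem : ∀ e ∈ edges, (G.ends e).1 ∈ verts ∧ (G.ends e).2 ∈ verts

namespace Multigraph

/-- A subgraph as a multigraph in its own right. -/
def Subgraph.toMultigraph {G : Multigraph} (H : G.Subgraph) : Multigraph where
  V := {v // v ∈ H.verts}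
  fintypeV := inferInstance
  decEqV := inferInstance
  E := {e // e ∈ H.edges}
  fintypeE := inferInstance
  decEqE := inferInstance
  ends := fun e => (⟨(G.ends e.1).1, (H.ends_mem e.1 e.2).1⟩, ⟨(G.ends e.1).2, (H.ends_mem e.1 e.2).2⟩)
  loopless := fun e h => G.loopless e.1 (congrArg Subtype.val h)

/-- `G` is `⟨ℤ₃⟩`-reduced: it has no `ℤ₃`-connected subgraph with at least two vertices. -/
def Z3Reduced (G : Multigraph) : Prop :=
  ∀ H : G.Subgraph, H.toMultigraph.Z3Connected → H.verts.card ≤ 1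

/-- The contraction `G/H` of a subgraph. -/
noncomputable def contractSubgraph (G : Multigraph) (H : G.Subgraph) : Multigraph :=
  G.contractEdges {e | e ∈ H.edges}

/-- The `⟨ℤ₃⟩`-reduction of `G`: contract (the edges of) all maximal `ℤ₃`-connected
subgraphs of `G`. -/
noncomputable def reduction (G : Multigraph) : Multigraph :=
  G.contractEdges {e | ∃ H : G.Subgraph, H.toMultigraph.Z3Connected ∧ e ∈ H.edges}

end Multigraph

/-- `r(n)`: the maximum number of edges of a `⟨ℤ₃⟩`-reduced graph on `n` vertices. -/
noncomputable def edgeMaxReduced (n : ℕ) : ℕ :=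
  sSup {m : ℕ | ∃ G : Multigraph, G.Z3Reduced ∧ Fintype.card G.V = n ∧ Fintype.card G.E = m}

/-- The complete graph `K_n`. -/
def completeK (n : ℕ) : Multigraph where
  V := Fin n
  fintypeV := inferInstance
  decEqV := inferInstance
  E := {p : Fin n × Fin n // p.1 < p.2}
  fintypeE := inferInstance
  decEqE := inferInstance
  ends := fun p => p.1
  loopless := fun p => Fin.ne_of_lt p.2

private theorem fin_succ_ne {n : ℕ} (hn : 2 ≤ n) (i : Fin n)
    (hv : (i : ℕ) = ((i : ℕ) + 1) % n) : False := by
  have hi := i.isLt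
  by_cases hlt : (i : ℕ) + 1 < n
  · rw [Nat.mod_eq_of_lt hlt] at hv; omega
  · have he : (i : ℕ) + 1 = n := by omega
    rw [he, Nat.mod_self] at hv; omega

/-- The cycle `C_n` (for `n ≥ 2`); `C_2` is a digon. -/
def cycleGraph (n : ℕ) (hn : 2 ≤ n) : Multigraph where
  V := Fin n
  fintypeV := inferInstance
  decEqV := inferInstance
  E := Fin n
  fintypeE := inferInstance
  decEqE := inferInstance
  ends := fun i => (i, ⟨((i : ℕ) + 1) % n, Nat.mod_lt _ (by omega)⟩)
  loopless := fun i h => fin_succ_ne hn i (congrArg Fin.val h)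

/-- The wheel `W_n` (for `n ≥ 2`): an `n`-cycle on `some 0, …, some (n-1)` together
with a center `none` joined to every vertex of the cycle. -/
def wheelGraph (n : ℕ) (hn : 2 ≤ n) : Multigraph where
  V := Option (Fin n)
  fintypeV := inferInstance
  decEqV := inferInstance
  E := Fin n ⊕ Fin n
  fintypeE := inferInstance
  decEqE := inferInstance
  ends := fun e => match e with
    | .inl i => (some i, some ⟨((i : ℕ) + 1) % n, Nat.mod_lt _ (by omega)⟩)
    | .inr i => (none, some i)
  loopless := by
    rintro (i | i) h
    · exact fin_succ_ne hn i (congrArg Fin.val (Option.some_injective _ h))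
    · exact absurd (show (none : Option (Fin n)) = some i from h) (by simp)


section Aux

namespace Multigraph

variable (G : Multigraph)

/-- signed incidence contribution of edge `e` oriented by `s` at vertex `u`. -/
def chi (e : G.E) (s : Bool) (u : G.V) : ZMod 3 :=
  (if (if s then (G.ends e).1 else (G.ends e).2) = u then 1 else 0) -
  (if (if s then (G.ends e).2 else (G.ends e).1) = u then 1 else 0)

lemma outIn (K : G.Subgraph) (D : K.toMultigraph.E → Bool) (u : K.toMultigraph.V) :
    (K.toMultigraph.outDeg D u : ZMod 3) - (K.toMultigraph.inDeg D u : ZMod 3) =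
      ∑ e : K.toMultigraph.E, G.chi e.1 (D e) u.1 := by
  rw [outDeg, inDeg, Finset.card_filter, Finset.card_filter]
  push_cast
  rw [← Finset.sum_sub_distrib]
  apply Finset.sum_congr rfl
  intro e _
  unfold chi tail head
  have key : ∀ (a : G.V) (h : a ∈ K.verts), ((⟨a, h⟩ : K.toMultigraph.V) = u) ↔ a = u.1 :=
    fun a h => Subtype.ext_iff
  cases D e <;> simp [Subgraph.toMultigraph, key]

lemma sum_subtype_fin {α M : Type*} [AddCommMonoid M] (s : Finset α)
    (f : α → M) : ∑ x : {x // x ∈ s}, f x.1 = ∑ x ∈ s, f x :=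
  (Finset.sum_subtype (p := fun x => x ∈ s) s (fun _ => Iff.rfl) f).symm

lemma chi_sum (e : G.E) (s : Bool) (S : Finset G.V) (h1 : (G.ends e).1 ∈ S)
    (h2 : (G.ends e).2 ∈ S) : ∑ x ∈ S, G.chi e s x = 0 := by
  unfold chi
  rw [Finset.sum_sub_distrib]
  cases s <;> simp [Finset.sum_ite_eq, h1, h2]

lemma chi_zero (e : G.E) (s : Bool) (u : G.V) (h1 : (G.ends e).1 ≠ u)
    (h2 : (G.ends e).2 ≠ u) : G.chi e s u = 0 := by
  cases s <;> simp [chi, h1, h2]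

lemma chi_v (e : G.E) (v x : G.V) (hvx : v ≠ x)
    (h : G.ends e = (v, x) ∨ G.ends e = (x, v)) :
    G.chi e (decide ((G.ends e).1 = v)) v = 1 ∧
      G.chi e (!decide ((G.ends e).1 = v)) v = -1 := by
  rcases h with h | h <;> simp [chi, h, hvx, hvx.symm]

lemma adj_symm {u v : G.V} (h : G.Adjacent u v) : G.Adjacent v u := by
  obtain ⟨e, he⟩ := h; exact ⟨e, he.symm⟩

lemma indepNum_lb (S : Finset G.V) (h : G.IsIndepSet S) : S.card ≤ G.indepNum := by
  apply le_csSup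
  · refine ⟨Fintype.card G.V, ?_⟩
    rintro n ⟨T, -, rfl⟩
    simpa using T.card_le_univ
  · exact ⟨S, h, rfl⟩

lemma no_two_edges (H : G.Subgraph) (hZ3 : H.toMultigraph.Z3Connected)
    (hmax : ∀ H' : G.Subgraph, H'.toMultigraph.Z3Connected →
      H.verts ⊆ H'.verts → H.edges ⊆ H'.edges → H' = H)
    (v : G.V) (hv : v ∉ H.verts) (x1 x2 : G.V) (hx1 : x1 ∈ H.verts) (hx2 : x2 ∈ H.verts)
    (e1 e2 : G.E) (hne : e1 ≠ e2)
    (h1 : G.ends e1 = (v, x1) ∨ G.ends e1 = (x1, v))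
    (h2 : G.ends e2 = (v, x2) ∨ G.ends e2 = (x2, v)) : False := by
  classical
  have hv1 : v ≠ x1 := fun h => hv (h ▸ hx1)
  have hv2 : v ≠ x2 := fun h => hv (h ▸ hx2)
  have he1H : e1 ∉ H.edges := by
    intro h
    obtain ⟨ha, hb⟩ := H.ends_mem e1 h
    rcases h1 with h' | h' <;> rw [h'] at ha hb <;> exact hv (by assumption)
  have he2H : e2 ∉ H.edges := by
    intro h
    obtain ⟨ha, hb⟩ := H.ends_mem e2 h
    rcases h2 with h' | h' <;> rw [h'] at ha hb <;> exact hv (by assumption)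
  have hend1a : (G.ends e1).1 ∈ insert v H.verts := by
    rcases h1 with h' | h' <;> rw [h'] <;> simp [hx1]
  have hend1b : (G.ends e1).2 ∈ insert v H.verts := by
    rcases h1 with h' | h' <;> rw [h'] <;> simp [hx1]
  have hend2a : (G.ends e2).1 ∈ insert v H.verts := by
    rcases h2 with h' | h' <;> rw [h'] <;> simp [hx2]
  have hend2b : (G.ends e2).2 ∈ insert v H.verts := by
    rcases h2 with h' | h' <;> rw [h'] <;> simp [hx2]
  have hmem : ∀ e ∈ insert e1 (insert e2 H.edges),
      (G.ends e).1 ∈ insert v H.verts ∧ (G.ends e).2 ∈ insert v H.verts := by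
    intro e he
    rcases Finset.mem_insert.1 he with rfl | he
    · exact ⟨hend1a, hend1b⟩
    rcases Finset.mem_insert.1 he with rfl | he
    · exact ⟨hend2a, hend2b⟩
    · obtain ⟨ha, hb⟩ := H.ends_mem e he
      exact ⟨Finset.mem_insert_of_mem ha, Finset.mem_insert_of_mem hb⟩
  set H' : G.Subgraph := ⟨insert v H.verts, insert e1 (insert e2 H.edges), hmem⟩ with hH'
  have hZ3' : H'.toMultigraph.Z3Connected := by
    intro b hb
    set bv := b ⟨v, Finset.mem_insert_self v H.verts⟩ with hbv
    set s1 : Bool := if bv = 1 then !(decide ((G.ends e1).1 = v)) else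
      decide ((G.ends e1).1 = v) with hs1
    set s2 : Bool := if bv = 2 then decide ((G.ends e2).1 = v) else
      !(decide ((G.ends e2).1 = v)) with hs2
    obtain ⟨hp1, hm1⟩ := G.chi_v e1 v x1 hv1 h1
    obtain ⟨hp2, hm2⟩ := G.chi_v e2 v x2 hv2 h2
    have hc1 : G.chi e1 s1 v = if bv = 1 then -1 else 1 := by
      rw [hs1]; by_cases hb1 : bv = 1 <;> simp [hb1, hp1, hm1]
    have hc2 : G.chi e2 s2 v = if bv = 2 then 1 else -1 := by
      rw [hs2]; by_cases hb2 : bv = 2 <;> simp [hb2, hp2, hm2]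
    have hsum_v : G.chi e1 s1 v + G.chi e2 s2 v = bv := by
      rw [hc1, hc2]
      have : ∀ z : ZMod 3,
          (if z = 1 then (-1 : ZMod 3) else 1) + (if z = 2 then 1 else -1) = z := by decide
      exact this bv
    set β : G.V → ZMod 3 := fun x => if h : x ∈ insert v H.verts then b ⟨x, h⟩ else 0 with hβ
    have hβb : ∀ u : {u // u ∈ insert v H.verts}, β u.1 = b u := by
      intro u
      simp only [hβ]
      rw [dif_pos u.2]
    have hβv : β v = bv := hβb ⟨v, Finset.mem_insert_self v H.verts⟩
    have hβsum : ∑ x ∈ insert v H.verts, β x = 0 := by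
      rw [← sum_subtype_fin (insert v H.verts) β]
      rw [Finset.sum_congr rfl (fun u _ => hβb u)]
      exact hb
    have hβH : ∑ x ∈ H.verts, β x = -β v := by
      have h := Finset.sum_insert (f := β) hv
      exact eq_neg_of_add_eq_zero_right (h.symm.trans hβsum)
    have hchiH1 : ∑ x ∈ H.verts, G.chi e1 s1 x = -G.chi e1 s1 v := by
      have h := Finset.sum_insert (f := fun x => G.chi e1 s1 x) hv
      exact eq_neg_of_add_eq_zero_right (h.symm.trans (G.chi_sum e1 s1 _ hend1a hend1b))
    have hchiH2 : ∑ x ∈ H.verts, G.chi e2 s2 x = -G.chi e2 s2 v := by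
      have h := Finset.sum_insert (f := fun x => G.chi e2 s2 x) hv
      exact eq_neg_of_add_eq_zero_right (h.symm.trans (G.chi_sum e2 s2 _ hend2a hend2b))
    set bH : H.toMultigraph.V → ZMod 3 :=
      fun u => β u.1 - G.chi e1 s1 u.1 - G.chi e2 s2 u.1 with hbHdef
    have hbH : ∑ u : H.toMultigraph.V, bH u = 0 := by
      have : ∑ u : H.toMultigraph.V, bH u =
          ∑ x ∈ H.verts, (β x - G.chi e1 s1 x - G.chi e2 s2 x) :=
        sum_subtype_fin H.verts (fun x => β x - G.chi e1 s1 x - G.chi e2 s2 x)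
      rw [this, Finset.sum_sub_distrib, Finset.sum_sub_distrib, hβH, hchiH1, hchiH2, hβv,
        ← hsum_v]
      ring
    obtain ⟨DH, hDH⟩ := hZ3 bH hbH
    refine ⟨fun e => if h : e.1 ∈ H.edges then DH ⟨e.1, h⟩ else if e.1 = e1 then s1 else s2, ?_⟩
    intro u
    rw [G.outIn]
    set F : G.E → ZMod 3 := fun e =>
      G.chi e (if h : e ∈ H.edges then DH ⟨e, h⟩ else if e = e1 then s1 else s2) u.1 with hFdef
    have hconv : ∑ e : H'.toMultigraph.E,
        G.chi e.1 ((fun e : H'.toMultigraph.E =>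
          if h : e.1 ∈ H.edges then DH ⟨e.1, h⟩ else if e.1 = e1 then s1 else s2) e) u.1 =
        ∑ e ∈ insert e1 (insert e2 H.edges), F e :=
      sum_subtype_fin (insert e1 (insert e2 H.edges)) F
    rw [hconv]
    have he1' : e1 ∉ insert e2 H.edges := by simp [hne, he1H]
    rw [Finset.sum_insert he1', Finset.sum_insert he2H]
    have hFe1 : F e1 = G.chi e1 s1 u.1 := by
      simp [hFdef, he1H]
    have hFe2 : F e2 = G.chi e2 s2 u.1 := by
      simp [hFdef, he2H, Ne.symm hne]
    rcases Finset.mem_insert.1 u.2 with huv | huH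
    · have hzero : ∑ e ∈ H.edges, F e = 0 := by
        apply Finset.sum_eq_zero
        intro e he
        obtain ⟨ha, hb'⟩ := H.ends_mem e he
        exact G.chi_zero e _ u.1 (fun h => hv (huv ▸ h ▸ ha)) (fun h => hv (huv ▸ h ▸ hb'))
      have hu : u = ⟨v, Finset.mem_insert_self v H.verts⟩ := Subtype.ext huv
      rw [hFe1, hFe2, hzero, huv, hu, add_zero]
      exact hsum_v
    · have hHsum : ∑ e ∈ H.edges, F e = ∑ e : H.toMultigraph.E, G.chi e.1 (DH e) u.1 := by
        rw [← sum_subtype_fin H.edges F]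
        apply Finset.sum_congr rfl
        intro e _
        simp only [hFdef]
        rw [dif_pos e.2]
      have houtin := G.outIn H DH ⟨u.1, huH⟩
      rw [hDH ⟨u.1, huH⟩] at houtin
      rw [hFe1, hFe2, hHsum, ← houtin]
      simp only [hbHdef]
      rw [← hβb u]
      ring
  have heq := hmax H' hZ3' (Finset.subset_insert _ _)
    (fun e he => Finset.mem_insert_of_mem (Finset.mem_insert_of_mem he))
  exact hv (heq ▸ (Finset.mem_insert_self v H.verts : v ∈ H'.verts))

lemma no_two_nbrs (H : G.Subgraph) (hZ3 : H.toMultigraph.Z3Connected)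
    (hmax : ∀ H' : G.Subgraph, H'.toMultigraph.Z3Connected →
      H.verts ⊆ H'.verts → H.edges ⊆ H'.edges → H' = H)
    (v : G.V) (hv : v ∉ H.verts) (x1 x2 : G.V) (hx1 : x1 ∈ H.verts) (hx2 : x2 ∈ H.verts)
    (hx12 : x1 ≠ x2) (ha1 : G.Adjacent v x1) (ha2 : G.Adjacent v x2) : False := by
  obtain ⟨e1, h1⟩ := ha1
  obtain ⟨e2, h2⟩ := ha2
  have hne : e1 ≠ e2 := by
    rintro rfl
    rcases h1 with h1 | h1 <;> rcases h2 with h2 | h2 <;> rw [h1, Prod.mk.injEq] at h2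
    · exact hx12 h2.2
    · exact hv (by rw [h2.1]; exact hx2)
    · exact hv (by rw [← h2.1]; exact hx1)
    · exact hx12 h2.1
  exact G.no_two_edges H hZ3 hmax v hv x1 x2 hx1 hx2 e1 e2 hne h1 h2

end Multigraph

end Aux

/-- If `α(G) ≤ t` and `H` is a maximal `ℤ₃`-connected subgraph of `G` with
`|V(H)| ≥ t + 1`, then `α(G − V(H)) ≤ t − 1`. -/
theorem indepNum_delete_maximal_z3 (G : Multigraph) (t : ℕ) (ht : G.indepNum ≤ t)
    (H : G.Subgraph) (hZ3 : H.toMultigraph.Z3Connected)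
    (hmax : ∀ H' : G.Subgraph, H'.toMultigraph.Z3Connected →
      H.verts ⊆ H'.verts → H.edges ⊆ H'.edges → H' = H)
    (hcard : t + 1 ≤ H.verts.card) :
    (G.induce H.vertsᶜ).indepNum ≤ t - 1 := by
  classical
  rcases Nat.eq_zero_or_pos t with rfl | htpos
  · exfalso
    obtain ⟨v, hvmem⟩ := Finset.card_pos.1 (by omega : 0 < H.verts.card)
    have h1 : ({v} : Finset G.V).card ≤ G.indepNum := by
      apply G.indepNum_lb
      intro a ha b hb hab
      rw [Finset.mem_singleton] at ha hb
      exact absurd (ha.trans hb.symm) hab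
    rw [Finset.card_singleton] at h1
    omega
  by_contra hcon
  push_neg at hcon
  have hne0 : Set.Nonempty {n : ℕ | ∃ S : Finset (G.induce H.vertsᶜ).V,
      (G.induce H.vertsᶜ).IsIndepSet S ∧ S.card = n} :=
    ⟨0, ∅, fun u hu => absurd hu (Finset.notMem_empty u), Finset.card_empty⟩
  obtain ⟨n, hnmem, hn⟩ := exists_lt_of_lt_csSup hne0 hcon
  obtain ⟨S, hSind, hScard⟩ := hnmem
  obtain ⟨T, hTS, hTcard⟩ := Finset.exists_subset_card_eq (s := S) (n := t) (by omega)
  have hTind : (G.induce H.vertsᶜ).IsIndepSet T :=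
    fun u hu w hw => hSind u (hTS hu) w (hTS hw)
  set T' : Finset G.V := T.image Subtype.val with hT'def
  have hT'card : T'.card = t := by
    rw [hT'def]; exact (Finset.card_image_of_injective T Subtype.val_injective).trans hTcard
  have hT'not : ∀ u ∈ T', u ∉ H.verts := by
    intro u hu
    obtain ⟨a, _, rfl⟩ := Finset.mem_image.1 hu
    exact Finset.mem_compl.1 a.2
  have hT'ind : G.IsIndepSet T' := by
    intro u hu w hw huw hadj
    obtain ⟨e, he⟩ := hadj
    obtain ⟨u', hu'T, hu'⟩ := Finset.mem_image.1 hu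
    obtain ⟨w', hw'T, hw'⟩ := Finset.mem_image.1 hw
    have hends : (G.ends e).1 ∈ H.vertsᶜ ∧ (G.ends e).2 ∈ H.vertsᶜ := by
      rcases he with he | he
      · rw [he]; exact ⟨by rw [← hu']; exact u'.2, by rw [← hw']; exact w'.2⟩
      · rw [he]; exact ⟨by rw [← hw']; exact w'.2, by rw [← hu']; exact u'.2⟩
    have hne' : u' ≠ w' := by
      intro h; apply huw; rw [← hu', ← hw', h]
    apply hTind u' hu'T w' hw'T hne'
    refine ⟨⟨e, hends⟩, ?_⟩
    rcases he with he | he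
    · left
      rw [Prod.ext_iff]
      exact ⟨Subtype.ext (by simp [Multigraph.induce, he, ← hu']),
             Subtype.ext (by simp [Multigraph.induce, he, ← hw'])⟩
    · right
      rw [Prod.ext_iff]
      exact ⟨Subtype.ext (by simp [Multigraph.induce, he, ← hw']),
             Subtype.ext (by simp [Multigraph.induce, he, ← hu'])⟩
  set Bad : Finset G.V := H.verts.filter (fun w => ∃ u ∈ T', G.Adjacent u w) with hBaddef
  have hBadcard : Bad.card ≤ T'.card := by
    apply Finset.card_le_card_of_injOn
      (fun w => if h : ∃ u ∈ T', G.Adjacent u w then h.choose else w)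
    · intro w hw
      have h := (Finset.mem_filter.1 hw).2
      simp only [dif_pos h]
      exact h.choose_spec.1
    · intro w1 hw1 w2 hw2 hf
      by_contra hne12
      have h1 := (Finset.mem_filter.1 (Finset.mem_coe.1 hw1)).2
      have h2 := (Finset.mem_filter.1 (Finset.mem_coe.1 hw2)).2
      have hf' : (if h : ∃ u ∈ T', G.Adjacent u w1 then h.choose else w1) =
          (if h : ∃ u ∈ T', G.Adjacent u w2 then h.choose else w2) := hf
      rw [dif_pos h1, dif_pos h2] at hf'
      have hadj2 : G.Adjacent h1.choose w2 := hf' ▸ h2.choose_spec.2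
      exact G.no_two_nbrs H hZ3 hmax h1.choose (hT'not _ h1.choose_spec.1) w1 w2
        (Finset.mem_filter.1 (Finset.mem_coe.1 hw1)).1
        (Finset.mem_filter.1 (Finset.mem_coe.1 hw2)).1
        hne12 h1.choose_spec.2 hadj2
  have hnotsub : ¬ H.verts ⊆ Bad := by
    intro hsub
    have := Finset.card_le_card hsub
    omega
  obtain ⟨w, hwH, hwBad⟩ := Finset.not_subset.1 hnotsub
  have hwT' : w ∉ T' := fun hw => (hT'not w hw) hwH
  have hindep : G.IsIndepSet (insert w T') := by
    intro a ha b hb hab hadj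
    rcases Finset.mem_insert.1 ha with rfl | ha' <;> rcases Finset.mem_insert.1 hb with rfl | hb'
    · exact hab rfl
    · exact hwBad (Finset.mem_filter.2 ⟨hwH, b, hb', G.adj_symm hadj⟩)
    · exact hwBad (Finset.mem_filter.2 ⟨hwH, a, ha', hadj⟩)
    · exact hT'ind a ha' b hb' hab hadj
  have hle := G.indepNum_lb _ hindep
  rw [Finset.card_insert_of_notMem hwT', hT'card] at hle
  omega
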